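/- Fix an integer n ≥ 2, γ > 0 with γ ≠ 1, a rate r > 0, and a survival function t ↦ ₜp_x : [0,∞) → (0,1] which is continuous, strictly decreasing, with ₀p_x = 1 and ₜp_x → 0 as t → ∞. Define the payout D(t) = β_{n,γ}(ₜp_x)^{1/γ} / ∫_0^∞ e^{−rs} β_{n,γ}(ₛp_x)^{1/γ} ds. Then D satisfies the tontine budget constraint ∫_0^∞ e^{−rt} D(t) dt = 1, and for every measurable d : [0,∞) → (0,∞) satisfying ∫_0^∞ e^{−rt} d(t) dt = 1 and for which the integrand below is integrable, one has ∫_0^∞ e^{−rt} β_{n,γ}(ₜp_x) · d(t)^{1−γ}/(1−γ) dt ≤ ∫_0^∞ e^{−rt} β_{n,γ}(ₜp_x) · D(t)^{1−γ}/(1−γ) dt. That is, D is the optimal tontine payout function for CRRA utility with risk aversion γ. -/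

import Mathlib

open MeasureTheory Real Finset

/-- `theta n γ p = E[(n/N(p))^{1-γ}]` where `N(p)-1 ~ Bin(n-1,p)`. -/
noncomputable def theta (n : ℕ) (γ p : ℝ) : ℝ :=
  ∑ k ∈ Finset.range n,
    ((n - 1).choose k : ℝ) * p ^ k * (1 - p) ^ (n - 1 - k) *
      ((n : ℝ) / ((k : ℝ) + 1)) ^ (1 - γ)

/-- `beta n γ p = p * theta n γ p`. -/
noncomputable def beta (n : ℕ) (γ p : ℝ) : ℝ := p * theta n γ p

/-- Optimal tontine payout function. -/
noncomputable def Dopt (n : ℕ) (γ r : ℝ) (p : ℝ → ℝ) (t : ℝ) : ℝ :=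
  beta n γ (p t) ^ (1 / γ) /
    ∫ s in Set.Ioi (0 : ℝ), Real.exp (-r * s) * beta n γ (p s) ^ (1 / γ)

/-- Cumulative discounted payout of the optimal tontine. -/
noncomputable def Delta (n : ℕ) (γ r : ℝ) (p : ℝ → ℝ) (t : ℝ) : ℝ :=
  ∫ s in (0 : ℝ)..t, Real.exp (-r * s) * Dopt n γ r p s


lemma sum_binom {n : ℕ} (hn : 1 ≤ n) (q : ℝ) :
    ∑ k ∈ Finset.range n, ((n - 1).choose k : ℝ) * q ^ k * (1 - q) ^ (n - 1 - k) = 1 := by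
  have h := add_pow q (1 - q) (n - 1)
  rw [Nat.sub_add_cancel hn] at h
  simp only [add_sub_cancel, one_pow] at h
  exact Eq.trans (Finset.sum_congr rfl fun k _ => by ring) h.symm

lemma term_nonneg {n k : ℕ} {q : ℝ} (hq0 : 0 ≤ q) (hq1 : q ≤ 1) :
    0 ≤ ((n - 1).choose k : ℝ) * q ^ k * (1 - q) ^ (n - 1 - k) := by
  have h1 : (0:ℝ) ≤ 1 - q := by linarith
  exact mul_nonneg (mul_nonneg (Nat.cast_nonneg _) (pow_nonneg hq0 _)) (pow_nonneg h1 _)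

lemma theta_pos {n : ℕ} (hn : 1 ≤ n) {γ q : ℝ} (hq : q ∈ Set.Ioc (0:ℝ) 1) :
    0 < theta n γ q := by
  obtain ⟨hq0, hq1⟩ := hq
  apply Finset.sum_pos'
  · intro k _
    exact mul_nonneg (term_nonneg hq0.le hq1) (Real.rpow_nonneg (by positivity) _)
  · refine ⟨n - 1, Finset.mem_range.mpr (by omega), ?_⟩
    rw [Nat.choose_self, Nat.sub_self]
    have h1 : (0:ℝ) < q ^ (n-1) := pow_pos hq0 _
    have h2 : (0:ℝ) < ((n : ℝ) / ((n-1 : ℕ) + 1 : ℝ)) ^ (1-γ) := by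
      apply Real.rpow_pos_of_pos
      have : (0:ℝ) < (n:ℝ) := by exact_mod_cast hn
      positivity
    calc (0:ℝ) < 1 * q ^ (n-1) * 1 * ((n : ℝ) / ((n-1 : ℕ) + 1 : ℝ)) ^ (1-γ) := by
          rw [mul_one, one_mul]; exact mul_pos h1 h2
      _ = _ := by norm_num

lemma theta_le {n : ℕ} (hn : 1 ≤ n) (γ : ℝ) {q : ℝ} (hq0 : 0 ≤ q) (hq1 : q ≤ 1) :
    theta n γ q ≤ max 1 ((n:ℝ) ^ (1 - γ)) := by
  have key : ∀ k ∈ Finset.range n,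
      ((n - 1).choose k : ℝ) * q ^ k * (1 - q) ^ (n - 1 - k) *
        ((n : ℝ) / ((k : ℝ) + 1)) ^ (1 - γ)
      ≤ ((n - 1).choose k : ℝ) * q ^ k * (1 - q) ^ (n - 1 - k) * max 1 ((n:ℝ) ^ (1 - γ)) := by
    intro k hk
    have hk' : (k:ℝ) + 1 ≤ n := by
      have := Finset.mem_range.mp hk
      exact_mod_cast Nat.succ_le_of_lt this
    have h1 : (1:ℝ) ≤ (n : ℝ) / ((k : ℝ) + 1) := by
      rw [le_div_iff₀ (by positivity)]
      simpa using hk'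
    have h2 : (n : ℝ) / ((k : ℝ) + 1) ≤ (n:ℝ) := by
      rw [div_le_iff₀ (by positivity)]
      nlinarith [Nat.cast_nonneg (α := ℝ) n, Nat.cast_nonneg (α := ℝ) k]
    have hb : ((n : ℝ) / ((k : ℝ) + 1)) ^ (1 - γ) ≤ max 1 ((n:ℝ) ^ (1 - γ)) := by
      rcases le_or_gt 0 (1 - γ) with h | h
      · exact le_max_of_le_right (Real.rpow_le_rpow (by positivity) h2 h)
      · exact le_max_of_le_left (Real.rpow_le_one_of_one_le_of_nonpos h1 h.le)
    exact mul_le_mul_of_nonneg_left hb (term_nonneg hq0 hq1)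
  calc theta n γ q ≤ ∑ k ∈ Finset.range n,
        ((n - 1).choose k : ℝ) * q ^ k * (1 - q) ^ (n - 1 - k) * max 1 ((n:ℝ) ^ (1 - γ)) :=
        Finset.sum_le_sum key
    _ = max 1 ((n:ℝ) ^ (1 - γ)) := by
        rw [← Finset.sum_mul, sum_binom hn q, one_mul]

lemma beta_pos {n : ℕ} (hn : 1 ≤ n) {γ q : ℝ} (hq : q ∈ Set.Ioc (0:ℝ) 1) :
    0 < beta n γ q := mul_pos hq.1 (theta_pos hn hq)

lemma beta_le_max {n : ℕ} (hn : 1 ≤ n) (γ : ℝ) {q : ℝ} (hq0 : 0 ≤ q) (hq1 : q ≤ 1) :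
    beta n γ q ≤ max 1 ((n:ℝ) ^ (1 - γ)) := by
  have h := theta_le hn γ hq0 hq1
  have hθ : 0 ≤ theta n γ q := by
    apply Finset.sum_nonneg
    intro k _
    exact mul_nonneg (term_nonneg hq0 hq1) (Real.rpow_nonneg (by positivity) _)
  calc beta n γ q = q * theta n γ q := rfl
    _ ≤ 1 * theta n γ q := mul_le_mul_of_nonneg_right hq1 hθ
    _ = theta n γ q := one_mul _
    _ ≤ _ := h

lemma beta_continuous (n : ℕ) (γ : ℝ) : Continuous (fun q => beta n γ q) := by
  unfold beta theta
  refine Continuous.mul continuous_id ?_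
  refine continuous_finset_sum _ (fun k _ => ?_)
  fun_prop

lemma tangent_line {γ x y : ℝ} (hγ : 0 < γ) (hγ1 : γ ≠ 1) (hx : 0 < x) (hy : 0 < y) :
    x ^ (1 - γ) / (1 - γ) ≤ y ^ (1 - γ) / (1 - γ) + y ^ (-γ) * (x - y) := by
  have hne : (1:ℝ) - γ ≠ 0 := fun h => hγ1 (by linarith)
  set z := x / y with hz
  have hz0 : 0 < z := div_pos hx hy
  have hxz : x = z * y := by rw [hz]; field_simp
  have hxr : x ^ (1-γ) = z ^ (1-γ) * y ^ (1-γ) := by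
    rw [hxz, Real.mul_rpow hz0.le hy.le]
  have hyy : y ^ (-γ) * (x - y) = y ^ (1-γ) * (z - 1) := by
    rw [hxz]
    have h : y ^ (-γ) * y = y ^ (1-γ) := by
      nth_rewrite 2 [← Real.rpow_one y]
      rw [← Real.rpow_add hy]; ring_nf
    rw [← h]; ring
  rw [hxr, hyy]
  have hyp : 0 < y ^ (1-γ) := Real.rpow_pos_of_pos hy _
  have key : z ^ (1-γ) / (1-γ) ≤ 1 / (1-γ) + (z - 1) := by
    rcases lt_or_gt_of_ne hγ1 with h | h
    · have hP0 : 0 < 1 - γ := by linarith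
      have hb := rpow_one_add_le_one_add_mul_self (s := z - 1) (by linarith) hP0.le (by linarith)
      rw [add_sub_cancel] at hb
      rw [div_le_iff₀ hP0]
      calc z ^ (1-γ) ≤ 1 + (1-γ) * (z-1) := hb
        _ = (1/(1-γ) + (z-1)) * (1-γ) := by field_simp
    · have hP : 1 - γ < 0 := by linarith
      have h1 : 1 + (1-γ) * Real.log z ≤ z ^ (1-γ) := by
        rw [Real.rpow_def_of_pos hz0, mul_comm (Real.log z)]
        linarith [Real.add_one_le_exp ((1-γ) * Real.log z)]
      have h2 : Real.log z ≤ z - 1 := Real.log_le_sub_one_of_pos hz0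
      have h3 : (1-γ) * (z - 1) ≤ (1-γ) * Real.log z :=
        mul_le_mul_of_nonpos_left h2 hP.le
      rw [div_le_iff_of_neg hP]
      calc (1/(1-γ) + (z-1)) * (1-γ) = 1 + (1-γ)*(z-1) := by field_simp
        _ ≤ z ^ (1-γ) := by linarith
  calc z ^ (1-γ) * y ^ (1-γ) / (1-γ) = y ^ (1-γ) * (z ^ (1-γ) / (1-γ)) := by ring
    _ ≤ y ^ (1-γ) * (1/(1-γ) + (z-1)) := mul_le_mul_of_nonneg_left key hyp.le
    _ = y ^ (1-γ) / (1-γ) + y ^ (1-γ) * (z-1) := by ring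

/-- The payout `D(t) = β_{n,γ}(ₜp_x)^{1/γ} / ∫_0^∞ e^{-rs} β_{n,γ}(ₛp_x)^{1/γ} ds`
satisfies the tontine budget constraint and maximizes CRRA discounted lifetime utility among
all budget-feasible payout functions. -/
theorem optimal_tontine_CRRA
    (n : ℕ) (hn : 2 ≤ n) (γ : ℝ) (hγ : 0 < γ) (hγ1 : γ ≠ 1)
    (r : ℝ) (hr : 0 < r)
    (p : ℝ → ℝ) (hcont : Continuous p) (hanti : StrictAntiOn p (Set.Ici 0))
    (hmem : ∀ t, 0 ≤ t → p t ∈ Set.Ioc (0 : ℝ) 1) (hp0 : p 0 = 1)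
    (hlim : Filter.Tendsto p Filter.atTop (nhds 0))
    (D : ℝ → ℝ)
    (hD : D = fun t => beta n γ (p t) ^ (1 / γ) /
        ∫ s in Set.Ioi (0 : ℝ), Real.exp (-r * s) * beta n γ (p s) ^ (1 / γ)) :
    (∫ t in Set.Ioi (0 : ℝ), Real.exp (-r * t) * D t = 1) ∧
    (∀ d : ℝ → ℝ, Measurable d → (∀ t, 0 ≤ t → 0 < d t) →
      (∫ t in Set.Ioi (0 : ℝ), Real.exp (-r * t) * d t = 1) →
      IntegrableOn
        (fun t => Real.exp (-r * t) * beta n γ (p t) * (d t ^ (1 - γ) / (1 - γ)))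
        (Set.Ioi 0) →
      ∫ t in Set.Ioi (0 : ℝ), Real.exp (-r * t) * beta n γ (p t) * (d t ^ (1 - γ) / (1 - γ)) ≤
        ∫ t in Set.Ioi (0 : ℝ), Real.exp (-r * t) * beta n γ (p t) * (D t ^ (1 - γ) / (1 - γ))) := by
  have hn1 : 1 ≤ n := by omega
  have hne : (1:ℝ) - γ ≠ 0 := fun h => hγ1 (by linarith)
  set M : ℝ := max 1 ((n:ℝ) ^ (1 - γ)) with hM
  set B : ℝ → ℝ := fun t => beta n γ (p t) with hB
  set F : ℝ → ℝ := fun t => Real.exp (-r * t) * B t ^ (1 / γ) with hF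
  have hBpos : ∀ t ∈ Set.Ioi (0:ℝ), 0 < B t := fun t ht => beta_pos hn1 (hmem t (le_of_lt ht))
  have hFcont : Continuous F := by
    apply Continuous.mul (by fun_prop)
    exact ((beta_continuous n γ).comp hcont).rpow_const (fun x => Or.inr (by positivity))
  have hFint : IntegrableOn F (Set.Ioi 0) := by
    apply Integrable.mono' ((exp_neg_integrableOn_Ioi 0 hr).const_mul (M ^ (1/γ)))
      hFcont.aestronglyMeasurable.restrict
    rw [ae_restrict_iff' measurableSet_Ioi]
    filter_upwards with t ht
    have hm := hmem t (le_of_lt ht)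
    have h0 : 0 ≤ B t := (hBpos t ht).le
    have h1 : B t ^ (1/γ) ≤ M ^ (1/γ) :=
      Real.rpow_le_rpow h0 (beta_le_max hn1 γ hm.1.le hm.2) (by positivity)
    rw [Real.norm_eq_abs, abs_of_nonneg (by positivity)]
    calc Real.exp (-r*t) * B t ^ (1/γ) ≤ Real.exp (-r*t) * M ^ (1/γ) :=
          mul_le_mul_of_nonneg_left h1 (Real.exp_pos _).le
      _ = M ^ (1/γ) * Real.exp (-r*t) := by ring
  set I : ℝ := ∫ s in Set.Ioi (0:ℝ), F s with hI
  have hIpos : 0 < I := by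
    rw [hI]
    refine (setIntegral_pos_iff_support_of_nonneg_ae ?_ hFint).mpr ?_
    · filter_upwards [ae_restrict_mem measurableSet_Ioi] with t ht
      have := hBpos t ht
      simp only [hF, Pi.zero_apply]
      positivity
    · have hsub : Set.Ioi (0:ℝ) ⊆ Function.support F := by
        intro t ht
        have := hBpos t ht
        have : 0 < F t := by
          simp only [hF]
          positivity
        exact this.ne'
      calc (0:ENNReal) < volume (Set.Ioi (0:ℝ)) := by simp
        _ = volume (Function.support F ∩ Set.Ioi 0) := by
            rw [Set.inter_eq_right.mpr hsub]
  -- the budget constraint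
  have h1 : ∫ t in Set.Ioi (0 : ℝ), Real.exp (-r * t) * D t = 1 := by
    rw [hD]
    have : ∀ t, Real.exp (-r * t) * (beta n γ (p t) ^ (1/γ) / I) = F t / I := fun t => by
      simp only [hF, hB]; ring
    simp only [← hI, ← hB, this, integral_div, ← hI, div_self hIpos.ne']
  refine ⟨h1, ?_⟩
  intro d hd hdpos hdb hdint
  -- D is positive on Ioi 0
  have hDpos : ∀ t ∈ Set.Ioi (0:ℝ), 0 < D t := by
    intro t ht
    rw [hD]
    have := hBpos t ht
    simp only [← hB, ← hI]
    positivity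
  have heD : IntegrableOn (fun t => Real.exp (-r * t) * D t) (Set.Ioi 0) := by
    have : (fun t => Real.exp (-r * t) * D t) = fun t => F t / I := by
      funext t; rw [hD]; simp only [hF, ← hB, ← hI]; ring
    rw [this]
    exact hFint.div_const I
  have hed : IntegrableOn (fun t => Real.exp (-r * t) * d t) (Set.Ioi 0) := by
    by_contra hcon
    rw [integral_undef hcon] at hdb
    norm_num at hdb
  -- G = the D-integrand equals a constant times F on Ioi 0
  set c : ℝ := (I ^ ((1:ℝ)-γ) * (1-γ))⁻¹ with hc
  have hGeq : ∀ t ∈ Set.Ioi (0:ℝ),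
      c * F t = Real.exp (-r * t) * B t * (D t ^ (1 - γ) / (1 - γ)) := by
    intro t ht
    have hBt := hBpos t ht
    have hIne : I ^ ((1:ℝ)-γ) ≠ 0 := (Real.rpow_pos_of_pos hIpos _).ne'
    rw [hD]
    simp only [← hB, ← hI]
    have e1 : (B t ^ (1/γ) / I) ^ ((1:ℝ)-γ) = B t ^ ((1/γ)*(1-γ)) / I ^ ((1:ℝ)-γ) := by
      rw [Real.div_rpow (Real.rpow_nonneg hBt.le _) hIpos.le, ← Real.rpow_mul hBt.le]
    have e2 : B t * B t ^ ((1/γ)*(1-γ)) = B t ^ (1/γ) := by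
      nth_rewrite 1 [← Real.rpow_one (B t)]
      rw [← Real.rpow_add hBt]
      congr 1
      field_simp
      ring
    rw [e1]
    simp only [hF, hc]
    rw [mul_inv, ← e2]
    ring
  have hGint : IntegrableOn
      (fun t => Real.exp (-r * t) * B t * (D t ^ (1 - γ) / (1 - γ))) (Set.Ioi 0) :=
    IntegrableOn.congr_fun (hFint.const_mul c) hGeq measurableSet_Ioi
  -- the key pointwise inequality
  have key : ∀ t ∈ Set.Ioi (0:ℝ),
      Real.exp (-r * t) * B t * (d t ^ (1 - γ) / (1 - γ)) ≤
        Real.exp (-r * t) * B t * (D t ^ (1 - γ) / (1 - γ)) +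
          I ^ γ * (Real.exp (-r * t) * d t - Real.exp (-r * t) * D t) := by
    intro t ht
    have hBt := hBpos t ht
    have hDt := hDpos t ht
    have hdt := hdpos t (le_of_lt ht)
    have tl := tangent_line hγ hγ1 hdt hDt
    have hA : 0 < Real.exp (-r * t) * B t := mul_pos (Real.exp_pos _) hBt
    have hBD : B t * D t ^ (-γ) = I ^ γ := by
      rw [hD]
      simp only [← hB, ← hI]
      rw [Real.div_rpow (Real.rpow_nonneg hBt.le _) hIpos.le, ← Real.rpow_mul hBt.le,
        Real.rpow_neg hIpos.le]
      have h5 : (1/γ) * (-γ) = -1 := by field_simp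
      rw [h5, Real.rpow_neg_one]
      field_simp [hBt.ne', (Real.rpow_pos_of_pos hIpos γ).ne']
    have step := mul_le_mul_of_nonneg_left tl hA.le
    calc Real.exp (-r * t) * B t * (d t ^ (1 - γ) / (1 - γ))
        ≤ Real.exp (-r * t) * B t * (D t ^ (1-γ)/(1-γ) + D t ^ (-γ) * (d t - D t)) := step
      _ = Real.exp (-r * t) * B t * (D t ^ (1-γ)/(1-γ)) +
            I ^ γ * (Real.exp (-r * t) * d t - Real.exp (-r * t) * D t) := by
          have : Real.exp (-r * t) * B t * (D t ^ (-γ) * (d t - D t)) =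
              I ^ γ * (Real.exp (-r * t) * d t - Real.exp (-r * t) * D t) := by
            rw [← hBD]; ring
          linarith [this]
  -- RHS of key is integrable
  have hMid : IntegrableOn
      (fun t => I ^ γ * (Real.exp (-r * t) * d t - Real.exp (-r * t) * D t)) (Set.Ioi 0) :=
    (hed.sub heD).const_mul _
  have hRint : IntegrableOn
      (fun t => Real.exp (-r * t) * B t * (D t ^ (1 - γ) / (1 - γ)) +
        I ^ γ * (Real.exp (-r * t) * d t - Real.exp (-r * t) * D t)) (Set.Ioi 0) :=
    hGint.add hMid
  calc ∫ t in Set.Ioi (0:ℝ), Real.exp (-r * t) * B t * (d t ^ (1 - γ) / (1 - γ))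
      ≤ ∫ t in Set.Ioi (0:ℝ), (Real.exp (-r * t) * B t * (D t ^ (1 - γ) / (1 - γ)) +
          I ^ γ * (Real.exp (-r * t) * d t - Real.exp (-r * t) * D t)) :=
        setIntegral_mono_on hdint hRint measurableSet_Ioi key
    _ = (∫ t in Set.Ioi (0:ℝ), Real.exp (-r * t) * B t * (D t ^ (1 - γ) / (1 - γ))) +
        I ^ γ * ((∫ t in Set.Ioi (0:ℝ), Real.exp (-r * t) * d t) -
          ∫ t in Set.Ioi (0:ℝ), Real.exp (-r * t) * D t) := by
        rw [integral_add hGint hMid, integral_const_mul, integral_sub hed heD]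
    _ = ∫ t in Set.Ioi (0:ℝ), Real.exp (-r * t) * B t * (D t ^ (1 - γ) / (1 - γ)) := by
        rw [hdb, h1]; ring
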